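/- Fix an integer M ≥ 2, layer sizes H_0, …, H_M ≥ 1, inputs X₁, …, X_n ∈ ℝ^N with at least one X_k nonzero, and targets Y₁, …, Y_n ∈ ℝ^{N'}. Let L_n(w) = (1/n) Σ_i ‖Y_i − f(X_i; w)‖², and for constants n, β > 0, γ > 0 and fixed w_μ ∈ ℝ^d define log π(w) = −nβ L_n(w) − (γ/2)‖w − w_μ‖² (up to an additive constant). Then there is no twice continuously differentiable function V : ℝ^d → [1, ∞) with globally bounded second derivatives and no constant C > 0 such that ‖∇V(w)‖² + ‖∇log π(w)‖² ≤ C V(w) for all w ∈ ℝ^d. -/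

import Mathlib

open scoped RealInnerProductSpace


/-- The end-to-end matrix `W_M ⋯ W_1` of a deep linear network with layer sizes
`H 0, H 1, …` and weight matrices `w l : Matrix (Fin (H (l+1))) (Fin (H l)) ℝ`. -/
def dlnProd (H : ℕ → ℕ) (w : ∀ l : ℕ, Matrix (Fin (H (l + 1))) (Fin (H l)) ℝ) :
    (M : ℕ) → Matrix (Fin (H M)) (Fin (H 0)) ℝ
  | 0 => 1
  | M + 1 => w M * dlnProd H w M

/-- Index type for the `d = Σ_{l=1}^M H_l H_{l-1}` matrix entries of the parameter
`w = (W_1, …, W_M)`, so that the parameter space is `ℝ^d = EuclideanSpace ℝ (DlnVars H M)`. -/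
abbrev DlnVars (H : ℕ → ℕ) (M : ℕ) := (l : Fin M) × (Fin (H (l.1 + 1)) × Fin (H l.1))

/-- Reassemble a parameter vector `w ∈ ℝ^d` into the tuple of weight matrices. -/
def dlnToMats (M : ℕ) (H : ℕ → ℕ) (w : DlnVars H M → ℝ) :
    ∀ l : ℕ, Matrix (Fin (H (l + 1))) (Fin (H l)) ℝ :=
  fun l => Matrix.of fun i j => if h : l < M then w ⟨⟨l, h⟩, (i, j)⟩ else 0

/-- The empirical loss `L_n(w) = (1/n) Σ_k ‖Y_k − f(X_k; w)‖²` of a deep linear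
network, as a function on the parameter space `ℝ^d`. -/
noncomputable def dlnEmpLoss (M : ℕ) (H : ℕ → ℕ) (n : ℕ)
    (X : Fin n → Fin (H 0) → ℝ) (Y : Fin n → Fin (H M) → ℝ)
    (w : EuclideanSpace ℝ (DlnVars H M)) : ℝ :=
  (1 / (n : ℝ)) * ∑ k : Fin n, ∑ i : Fin (H M),
    (Y k i - (dlnProd H (dlnToMats M H (fun v => w v)) M).mulVec (X k) i) ^ 2

/-- The log tempered posterior (up to an additive constant)
`log π(w) = −nβ L_n(w) − (γ/2)‖w − w_μ‖²` with Gaussian localization prior. -/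
noncomputable def dlnLogPost (M : ℕ) (H : ℕ → ℕ) (n : ℕ)
    (X : Fin n → Fin (H 0) → ℝ) (Y : Fin n → Fin (H M) → ℝ) (β γ : ℝ)
    (wμ : EuclideanSpace ℝ (DlnVars H M)) (w : EuclideanSpace ℝ (DlnVars H M)) : ℝ :=
  -((n : ℝ) * β) * dlnEmpLoss M H n X Y w - (γ / 2) * ‖w - wμ‖ ^ 2

/-! ### Auxiliary lemmas -/

lemma dlnProd_entry_differentiable (M : ℕ) (H : ℕ → ℕ) :
    ∀ (m : ℕ) (i : Fin (H m)) (j : Fin (H 0)),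
      Differentiable ℝ (fun w : EuclideanSpace ℝ (DlnVars H M) =>
        dlnProd H (dlnToMats M H (fun v => w v)) m i j) := by
  intro m
  induction m with
  | zero =>
      intro i j
      simp only [dlnProd]
      exact differentiable_const _
  | succ m ih =>
      intro i j
      have heq : (fun w : EuclideanSpace ℝ (DlnVars H M) =>
          dlnProd H (dlnToMats M H (fun v => w v)) (m + 1) i j)
          = fun w => ∑ p : Fin (H m), dlnToMats M H (fun v => w v) m i p *
              dlnProd H (dlnToMats M H (fun v => w v)) m p j := by
        funext w; simp [dlnProd, Matrix.mul_apply]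
      rw [heq]
      apply Differentiable.fun_sum
      intro p _
      refine Differentiable.mul ?_ (ih p j)
      simp only [dlnToMats, Matrix.of_apply]
      by_cases h : m < M
      · simp only [dif_pos h]
        exact ((EuclideanSpace.proj (⟨⟨m, h⟩, (i, p)⟩ : DlnVars H M) :
          EuclideanSpace ℝ (DlnVars H M) →L[ℝ] ℝ)).differentiable
      · simp only [dif_neg h]; exact differentiable_const _

lemma dlnLogPost_differentiable (M : ℕ) (H : ℕ → ℕ) (n : ℕ)
    (X : Fin n → Fin (H 0) → ℝ) (Y : Fin n → Fin (H M) → ℝ) (β γ : ℝ)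
    (wμ : EuclideanSpace ℝ (DlnVars H M)) :
    Differentiable ℝ (dlnLogPost M H n X Y β γ wμ) := by
  unfold dlnLogPost
  apply Differentiable.sub
  · apply Differentiable.const_mul
    unfold dlnEmpLoss
    apply Differentiable.const_mul
    apply Differentiable.fun_sum; intro k _
    apply Differentiable.fun_sum; intro i _
    have heq : (fun w : EuclideanSpace ℝ (DlnVars H M) =>
        (Y k i - (dlnProd H (dlnToMats M H (fun v => w v)) M).mulVec (X k) i) ^ 2)
        = fun w => (Y k i - ∑ j : Fin (H 0),
            dlnProd H (dlnToMats M H (fun v => w v)) M i j * X k j) ^ 2 := by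
      funext w; simp [Matrix.mulVec, dotProduct]
    rw [heq]
    exact ((differentiable_const _).sub (Differentiable.fun_sum fun j _ =>
      (dlnProd_entry_differentiable M H M i j).mul_const _)).pow 2
  · exact Differentiable.const_mul
      (((contDiff_id.sub contDiff_const).norm_sq (𝕜 := ℝ)).differentiable (n := 1) (by norm_num)) _

lemma abs_fderiv_apply_le_gradient_norm {E : Type*} [NormedAddCommGroup E]
    [InnerProductSpace ℝ E] [CompleteSpace E] {F : E → ℝ} {x : E}
    (hF : DifferentiableAt ℝ F x) (u : E) :
    |fderiv ℝ F x u| ≤ ‖gradient F x‖ * ‖u‖ := by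
  have h : fderiv ℝ F x u = ⟪gradient F x, u⟫ := by
    rw [hF.hasGradientAt.hasFDerivAt.fderiv]
    exact InnerProductSpace.toDual_apply_apply
  rw [h]
  exact abs_real_inner_le_norm _ _

/-- Direction vector: entry 1 at position `(0, j₀)` of `W₁` and `(0,0)` of the
other layers. -/
def dlnDir (M : ℕ) (H : ℕ → ℕ) (j₀ : Fin (H 0)) : EuclideanSpace ℝ (DlnVars H M) :=
  WithLp.toLp 2 (fun v : DlnVars H M =>
    if v.2.1.1 = 0 ∧ v.2.2.1 = (if v.1.1 = 0 then (j₀ : ℕ) else 0) then 1 else 0)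

lemma dln_ray_entry (M : ℕ) (H : ℕ → ℕ) (hH : ∀ l ≤ M, 1 ≤ H l)
    (j₀ : Fin (H 0)) (t : ℝ) :
    ∀ (m : ℕ), 1 ≤ m → m ≤ M → ∀ (i : Fin (H m)) (j : Fin (H 0)),
      dlnProd H (dlnToMats M H (fun v => (t • dlnDir M H j₀) v)) m i j
        = if (i : ℕ) = 0 ∧ j = j₀ then t ^ m else 0 := by
  have hW : ∀ (m : ℕ) (hm : m < M) (i : Fin (H (m + 1))) (p : Fin (H m)),
      dlnToMats M H (fun v => (t • dlnDir M H j₀) v) m i p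
        = if (i : ℕ) = 0 ∧ (p : ℕ) = (if m = 0 then (j₀ : ℕ) else 0) then t else 0 := by
    intro m hm i p
    simp only [dlnToMats, Matrix.of_apply, dif_pos hm]
    show (t • dlnDir M H j₀) (⟨⟨m, hm⟩, (i, p)⟩ : DlnVars H M) = _
    simp only [PiLp.smul_apply, smul_eq_mul, dlnDir, PiLp.toLp_apply]
    split_ifs <;> simp
  intro m
  induction m with
  | zero => omega
  | succ m ih =>
      intro _ hmM i j
      rcases Nat.eq_zero_or_pos m with rfl | hmpos
      · have h1 : dlnProd H (dlnToMats M H (fun v => (t • dlnDir M H j₀) v)) 1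
            = dlnToMats M H (fun v => (t • dlnDir M H j₀) v) 0 := by
          show _ * _ = _
          rw [show dlnProd H (dlnToMats M H (fun v => (t • dlnDir M H j₀) v)) 0 = 1 from rfl,
            Matrix.mul_one]
        rw [h1, hW 0 (by omega) i j]
        norm_num [Fin.ext_iff]
      · have hstep : dlnProd H (dlnToMats M H (fun v => (t • dlnDir M H j₀) v)) (m + 1) i j
            = ∑ p : Fin (H m),
                dlnToMats M H (fun v => (t • dlnDir M H j₀) v) m i p *
                dlnProd H (dlnToMats M H (fun v => (t • dlnDir M H j₀) v)) m p j := by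
          simp [dlnProd, Matrix.mul_apply]
        rw [hstep]
        have hz : (0 : ℕ) < H m := hH m (by omega)
        rw [Finset.sum_eq_single (⟨0, hz⟩ : Fin (H m))]
        · rw [hW m (by omega) i ⟨0, hz⟩, ih (by omega) (by omega) ⟨0, hz⟩ j]
          simp only [if_neg (Nat.pos_iff_ne_zero.mp hmpos)]
          by_cases hi : (i : ℕ) = 0
          · by_cases hj : j = j₀
            · simp [hi, hj, pow_succ, mul_comm]
            · simp [hi, hj]
          · simp [hi]
        · intro p _ hp
          have hp0 : (p : ℕ) ≠ 0 := fun h => hp (Fin.ext h)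
          have hm0 : m ≠ 0 := by omega
          rw [hW m (by omega) i p]
          simp [hp0, hm0]
        · intro h; exact absurd (Finset.mem_univ _) h

set_option maxHeartbeats 1000000 in
/-- for a deep linear network with `M ≥ 2` layers (and some nonzero
input), there is no twice continuously differentiable Lyapunov function
`V : ℝ^d → [1, ∞)` with globally bounded second derivatives and constant `C > 0`
such that `‖∇V(w)‖² + ‖∇log π(w)‖² ≤ C V(w)` for all `w`. -/
theorem dln_logPost_no_lyapunov_function
    (M : ℕ) (hM : 2 ≤ M) (H : ℕ → ℕ) (hH : ∀ l ≤ M, 1 ≤ H l)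
    (n : ℕ) (hn : 0 < n) (β γ : ℝ) (hβ : 0 < β) (hγ : 0 < γ)
    (X : Fin n → Fin (H 0) → ℝ) (hX : ∃ k, X k ≠ 0)
    (Y : Fin n → Fin (H M) → ℝ)
    (wμ : EuclideanSpace ℝ (DlnVars H M)) :
    ¬ ∃ (V : EuclideanSpace ℝ (DlnVars H M) → ℝ) (C K : ℝ),
        ContDiff ℝ 2 V
        ∧ (∀ w, 1 ≤ V w)
        ∧ (∀ w, ‖iteratedFDeriv ℝ 2 V w‖ ≤ K)
        ∧ 0 < C
        ∧ ∀ w, ‖gradient V w‖ ^ 2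
            + ‖gradient (dlnLogPost M H n X Y β γ wμ) w‖ ^ 2 ≤ C * V w := by
  rintro ⟨V, C, K, hV, hV1, hK, hC, hIneq⟩
  obtain ⟨k₀, hk₀⟩ := hX
  obtain ⟨j₀, hj₀⟩ := Function.ne_iff.mp hk₀
  rw [Pi.zero_apply] at hj₀
  set u : EuclideanSpace ℝ (DlnVars H M) := dlnDir M H j₀ with hu
  set F := dlnLogPost M H n X Y β γ wμ with hFdef
  have hFd : Differentiable ℝ F := dlnLogPost_differentiable M H n X Y β γ wμ
  have hVd : Differentiable ℝ V := hV.differentiable (by norm_num)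
  set zM : Fin (H M) := ⟨0, hH M le_rfl⟩ with hzM
  -- the value of the network along the ray
  have hmv : ∀ t : ℝ, (dlnProd H (dlnToMats M H (fun v => (t • u) v)) M).mulVec (X k₀) zM
      = t ^ M * X k₀ j₀ := by
    intro t
    have hsum : (dlnProd H (dlnToMats M H (fun v => (t • u) v)) M).mulVec (X k₀) zM
        = ∑ j : Fin (H 0), dlnProd H (dlnToMats M H (fun v => (t • u) v)) M zM j * X k₀ j := by
      simp [Matrix.mulVec, dotProduct]
    rw [hsum, Finset.sum_eq_single j₀]
    · rw [dln_ray_entry M H hH j₀ t M (by omega) le_rfl zM j₀]; simp [hzM]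
    · intro j _ hj
      rw [dln_ray_entry M H hH j₀ t M (by omega) le_rfl zM j]; simp [hj]
    · intro h; exact absurd (Finset.mem_univ _) h
  -- upper bound on the log posterior along the ray
  have hloss : ∀ t : ℝ, F (t • u) ≤ -(β * (Y k₀ zM - t ^ M * X k₀ j₀) ^ 2) := by
    intro t
    set S := ∑ k : Fin n, ∑ i : Fin (H M),
      (Y k i - (dlnProd H (dlnToMats M H (fun v => (t • u) v)) M).mulVec (X k) i) ^ 2 with hS
    have hterm : (Y k₀ zM - t ^ M * X k₀ j₀) ^ 2 ≤ S := by
      have h1 : (Y k₀ zM - (dlnProd H (dlnToMats M H (fun v => (t • u) v)) M).mulVec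
            (X k₀) zM) ^ 2
          ≤ ∑ i : Fin (H M),
            (Y k₀ i - (dlnProd H (dlnToMats M H (fun v => (t • u) v)) M).mulVec (X k₀) i) ^ 2 :=
        Finset.single_le_sum
          (f := fun i : Fin (H M) =>
            (Y k₀ i - (dlnProd H (dlnToMats M H (fun v => (t • u) v)) M).mulVec (X k₀) i) ^ 2)
          (fun i _ => sq_nonneg _) (Finset.mem_univ zM)
      have h2 : (∑ i : Fin (H M),
            (Y k₀ i - (dlnProd H (dlnToMats M H (fun v => (t • u) v)) M).mulVec (X k₀) i) ^ 2)
          ≤ S :=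
        Finset.single_le_sum
          (f := fun k : Fin n => ∑ i : Fin (H M),
            (Y k i - (dlnProd H (dlnToMats M H (fun v => (t • u) v)) M).mulVec (X k) i) ^ 2)
          (fun k _ => Finset.sum_nonneg fun i _ => sq_nonneg _) (Finset.mem_univ k₀)
      rw [hmv t] at h1
      linarith
    have hFval : F (t • u) = -((n : ℝ) * β) * ((1 / (n : ℝ)) * S) -
        (γ / 2) * ‖t • u - wμ‖ ^ 2 := rfl
    have hn' : (0 : ℝ) < (n : ℝ) := Nat.cast_pos.mpr hn
    have heq : -((n : ℝ) * β) * ((1 / (n : ℝ)) * S) = -(β * S) := by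
      field_simp
    have hnorm : 0 ≤ (γ / 2) * ‖t • u - wμ‖ ^ 2 := by positivity
    rw [hFval, heq]
    nlinarith [mul_le_mul_of_nonneg_left hterm hβ.le]
  -- derivative along the ray
  have hray : ∀ (G : EuclideanSpace ℝ (DlnVars H M) → ℝ), Differentiable ℝ G → ∀ x : ℝ,
      HasDerivAt (fun t : ℝ => G (t • u)) (fderiv ℝ G (x • u) u) x := by
    intro G hG x
    have h1 : HasDerivAt (fun t : ℝ => t • u) u x := by
      simpa using (hasDerivAt_id x).smul_const u
    exact (hG (x • u)).hasFDerivAt.comp_hasDerivAt x h1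
  have hVpos : ∀ w, (0 : ℝ) < V w := fun w => lt_of_lt_of_le zero_lt_one (hV1 w)
  set a := Real.sqrt C * ‖u‖ with ha
  have ha0 : 0 ≤ a := mul_nonneg (Real.sqrt_nonneg _) (norm_nonneg _)
  have hgradV : ∀ w, ‖gradient V w‖ ≤ Real.sqrt C * Real.sqrt (V w) := by
    intro w
    have h2 := hIneq w
    have h3 : ‖gradient V w‖ ^ 2 ≤ C * V w := by
      nlinarith [sq_nonneg ‖gradient F w‖]
    have h4 := (Real.le_sqrt (norm_nonneg _) (mul_nonneg hC.le (hVpos w).le)).mpr h3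
    rwa [Real.sqrt_mul hC.le] at h4
  have hgradF : ∀ w, ‖gradient F w‖ ≤ Real.sqrt C * Real.sqrt (V w) := by
    intro w
    have h2 := hIneq w
    have h3 : ‖gradient F w‖ ^ 2 ≤ C * V w := by
      nlinarith [sq_nonneg ‖gradient V w‖]
    have h4 := (Real.le_sqrt (norm_nonneg _) (mul_nonneg hC.le (hVpos w).le)).mpr h3
    rwa [Real.sqrt_mul hC.le] at h4
  set ψ := fun x : ℝ => Real.sqrt (V (x • u)) with hψdef
  have hψ1 : ∀ x, 1 ≤ ψ x := by
    intro x
    rw [show (1 : ℝ) = Real.sqrt 1 from Real.sqrt_one.symm]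
    exact Real.sqrt_le_sqrt (hV1 _)
  have hψd : ∀ x : ℝ, HasDerivAt ψ (fderiv ℝ V (x • u) u / (2 * ψ x)) x :=
    fun x => (hray V hVd x).sqrt (ne_of_gt (hVpos _))
  have hψ'b : ∀ x : ℝ, |fderiv ℝ V (x • u) u / (2 * ψ x)| ≤ a / 2 := by
    intro x
    have h1 := abs_fderiv_apply_le_gradient_norm (hVd (x • u)) u
    have h2 := hgradV (x • u)
    have h3 : (0 : ℝ) < ψ x := lt_of_lt_of_le zero_lt_one (hψ1 x)
    have h5 : |fderiv ℝ V (x • u) u| ≤ a * ψ x := by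
      calc |fderiv ℝ V (x • u) u| ≤ ‖gradient V (x • u)‖ * ‖u‖ := h1
        _ ≤ (Real.sqrt C * ψ x) * ‖u‖ := mul_le_mul_of_nonneg_right h2 (norm_nonneg _)
        _ = a * ψ x := by ring
    rw [abs_div, abs_of_pos (by positivity : (0 : ℝ) < 2 * ψ x),
      div_le_iff₀ (by positivity : (0 : ℝ) < 2 * ψ x)]
    nlinarith
  have hψle : ∀ t : ℝ, 0 ≤ t → ψ t ≤ ψ 0 + a / 2 * t := by
    intro t ht
    have hm := norm_image_sub_le_of_norm_deriv_le_segment'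
      (f := ψ) (f' := fun x => fderiv ℝ V (x • u) u / (2 * ψ x)) (a := (0 : ℝ)) (b := t)
      (C := a / 2)
      (fun x _ => (hψd x).hasDerivWithinAt)
      (fun x _ => by simpa only [Real.norm_eq_abs] using hψ'b x)
      t (Set.right_mem_Icc.mpr ht)
    rw [Real.norm_eq_abs] at hm
    have h6 := le_abs_self (ψ t - ψ 0)
    nlinarith
  set g := fun x : ℝ => F (x • u) with hgdef
  have hgd : ∀ x : ℝ, HasDerivAt g (fderiv ℝ F (x • u) u) x := hray F hFd
  have hgb : ∀ t : ℝ, 0 ≤ t → |g t - g 0| ≤ (a * ψ 0 + a ^ 2 / 2 * t) * t := by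
    intro t ht
    have hm := norm_image_sub_le_of_norm_deriv_le_segment'
      (f := g) (f' := fun x => fderiv ℝ F (x • u) u) (a := (0 : ℝ)) (b := t)
      (C := a * ψ 0 + a ^ 2 / 2 * t)
      (fun x _ => (hgd x).hasDerivWithinAt)
      (fun x hx => by
        obtain ⟨hx0, hxt⟩ := hx
        have h1 := abs_fderiv_apply_le_gradient_norm (hFd (x • u)) u
        have h2 := hgradF (x • u)
        have h3 := hψle x hx0
        have h5 : |fderiv ℝ F (x • u) u| ≤ a * ψ x := by
          calc |fderiv ℝ F (x • u) u| ≤ ‖gradient F (x • u)‖ * ‖u‖ := h1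
            _ ≤ (Real.sqrt C * ψ x) * ‖u‖ := mul_le_mul_of_nonneg_right h2 (norm_nonneg _)
            _ = a * ψ x := by ring
        rw [Real.norm_eq_abs]
        nlinarith [hψ1 x, hxt.le])
      t (Set.right_mem_Icc.mpr ht)
    rw [Real.norm_eq_abs] at hm
    simpa using hm
  have hlossg : ∀ x : ℝ, g x ≤ -(β * (Y k₀ zM - x ^ M * X k₀ j₀) ^ 2) := fun x => hloss x
  have hs : (0 : ℝ) < |X k₀ j₀| := abs_pos.mpr hj₀
  obtain ⟨D, hD0, hquad⟩ : ∃ D, 0 ≤ D ∧ ∀ t : ℝ, 1 ≤ t →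
      β * (Y k₀ zM - t ^ M * X k₀ j₀) ^ 2 ≤ D * t ^ 2 := by
    refine ⟨|g 0| + a * ψ 0 + a ^ 2 / 2, ?_, ?_⟩
    · nlinarith [abs_nonneg (g 0), mul_nonneg ha0 (le_trans zero_le_one (hψ1 0)), sq_nonneg a]
    · intro t ht1
      have ht0 : (0 : ℝ) ≤ t := le_trans zero_le_one ht1
      have h2 := hgb t ht0
      have h1 := hlossg t
      have h9 := neg_abs_le (g t - g 0)
      have h11 := neg_abs_le (g 0)
      have h12 : 0 ≤ a * ψ 0 := mul_nonneg ha0 (le_trans zero_le_one (hψ1 0))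
      have ht2 : t ≤ t ^ 2 := by nlinarith
      nlinarith [mul_le_mul_of_nonneg_left ht2 h12,
        mul_le_mul_of_nonneg_left (ht1.trans ht2) (abs_nonneg (g 0))]
  obtain ⟨r, hr0, hr2⟩ : ∃ r : ℝ, 0 ≤ r ∧ β * r ^ 2 = D := by
    refine ⟨Real.sqrt (D / β), Real.sqrt_nonneg _, ?_⟩
    rw [Real.sq_sqrt (div_nonneg hD0 hβ.le)]
    field_simp
  obtain ⟨t, ht1, hts⟩ : ∃ t : ℝ, 1 ≤ t ∧ |Y k₀ zM| + r + 1 ≤ t * |X k₀ j₀| :=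
    ⟨max 1 ((|Y k₀ zM| + r + 1) / |X k₀ j₀|), le_max_left _ _,
      (div_le_iff₀ hs).mp (le_max_right _ _)⟩
  have ht0 : (0 : ℝ) ≤ t := le_trans zero_le_one ht1
  have htM : t ^ 2 ≤ t ^ M := pow_le_pow_right₀ ht1 hM
  have hq := hquad t ht1
  have h6 : t * (|Y k₀ zM| + r + 1) ≤ t * (t * |X k₀ j₀|) := mul_le_mul_of_nonneg_left hts ht0
  have h5 : r * t + |Y k₀ zM| + 1 ≤ t ^ 2 * |X k₀ j₀| := by
    nlinarith [abs_nonneg (Y k₀ zM), hr0]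
  have h7 : t ^ 2 * |X k₀ j₀| ≤ t ^ M * |X k₀ j₀| :=
    mul_le_mul_of_nonneg_right htM (abs_nonneg _)
  have h8 : t ^ M * |X k₀ j₀| - |Y k₀ zM| ≤ |Y k₀ zM - t ^ M * X k₀ j₀| := by
    have h9 : |t ^ M * X k₀ j₀| - |Y k₀ zM| ≤ |t ^ M * X k₀ j₀ - Y k₀ zM| :=
      abs_sub_abs_le_abs_sub _ _
    rw [abs_mul, abs_of_nonneg (pow_nonneg ht0 M)] at h9
    rw [abs_sub_comm] at h9
    linarith
  have h10 : r * t + 1 ≤ |Y k₀ zM - t ^ M * X k₀ j₀| := by linarith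
  have h11 : (r * t + 1) ^ 2 ≤ (Y k₀ zM - t ^ M * X k₀ j₀) ^ 2 := by
    nlinarith [sq_abs (Y k₀ zM - t ^ M * X k₀ j₀),
      abs_nonneg (Y k₀ zM - t ^ M * X k₀ j₀), mul_nonneg hr0 ht0]
  have hDt : D * t ^ 2 = β * r ^ 2 * t ^ 2 := by rw [hr2]
  have h12 := mul_le_mul_of_nonneg_left h11 hβ.le
  nlinarith [mul_nonneg (mul_nonneg hβ.le hr0) ht0]
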